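/- Let ρ₁ = log(√2). Then: (i) for all x ∈ [0, ρ₁], 384·(e^{3x} + 2e^{-3x}) ≤ 960√2, with equality iff x = ρ₁; (ii) for all x ∈ [0, ρ₁], 48·(2e^{3(ρ₁+x)} + 6e^{3(ρ₁-x)} + 16e^{-3(ρ₁+x)}) ≤ 960√2, with equality iff x = 0; (iii) for all x ∈ [0, (log 3)/2], 48·(3e^{3x} + 21e^{-3x}) ≤ 1152 < 960√2. Hence the overall maximum of these three families of values is 960√2, attained only in case (i) at x = ρ₁ and in case (ii) at x = 0. -/

import Mathlib

/-- Theorem 4.11 (analytic core): with `ρ₁ = log √2`,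
(i) for `x ∈ [0, ρ₁]`, `384(e^{3x} + 2e^{-3x}) ≤ 960√2`, with equality iff `x = ρ₁`;
(ii) for `x ∈ [0, ρ₁]`, `48(2e^{3(ρ₁+x)} + 6e^{3(ρ₁-x)} + 16e^{-3(ρ₁+x)}) ≤ 960√2`,
with equality iff `x = 0`;
(iii) for `x ∈ [0, (log 3)/2]`, `48(3e^{3x} + 21e^{-3x}) ≤ 1152 < 960√2`. -/
theorem optimal_horoball_packing_24cell (ρ₁ : ℝ) (hρ₁ : ρ₁ = Real.log (Real.sqrt 2)) :
    (∀ x ∈ Set.Icc (0 : ℝ) ρ₁,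
      384 * (Real.exp (3 * x) + 2 * Real.exp (-(3 * x))) ≤ 960 * Real.sqrt 2 ∧
      (384 * (Real.exp (3 * x) + 2 * Real.exp (-(3 * x))) = 960 * Real.sqrt 2 ↔ x = ρ₁)) ∧
    (∀ x ∈ Set.Icc (0 : ℝ) ρ₁,
      48 * (2 * Real.exp (3 * (ρ₁ + x)) + 6 * Real.exp (3 * (ρ₁ - x)) +
        16 * Real.exp (-(3 * (ρ₁ + x)))) ≤ 960 * Real.sqrt 2 ∧
      (48 * (2 * Real.exp (3 * (ρ₁ + x)) + 6 * Real.exp (3 * (ρ₁ - x)) +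
        16 * Real.exp (-(3 * (ρ₁ + x)))) = 960 * Real.sqrt 2 ↔ x = 0)) ∧
    (∀ x ∈ Set.Icc (0 : ℝ) (Real.log 3 / 2),
      48 * (3 * Real.exp (3 * x) + 21 * Real.exp (-(3 * x))) ≤ 1152) ∧
    (1152 : ℝ) < 960 * Real.sqrt 2 := by
  have hs0 : (0:ℝ) < Real.sqrt 2 := Real.sqrt_pos.mpr (by norm_num)
  have hs : Real.sqrt 2 * Real.sqrt 2 = 2 := Real.mul_self_sqrt (by norm_num)
  have hρ : Real.exp ρ₁ = Real.sqrt 2 := by rw [hρ₁, Real.exp_log hs0]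
  have h3ρ : Real.exp (3 * ρ₁) = 2 * Real.sqrt 2 := by
    rw [show (3:ℝ) * ρ₁ = ρ₁ + ρ₁ + ρ₁ by ring, Real.exp_add, Real.exp_add, hρ]
    nlinarith [hs]
  have hinv : (2 * Real.sqrt 2)⁻¹ = Real.sqrt 2 / 4 := by
    field_simp
    linear_combination -2 * hs
  refine ⟨?_, ?_, ?_, by nlinarith [hs, hs0]⟩
  · intro x ⟨hx0, hx1⟩
    set u := Real.exp (3 * x) with hu
    have hupos : 0 < u := Real.exp_pos _
    have hu1 : 1 ≤ u := by
      rw [hu, ← Real.exp_zero]; exact Real.exp_le_exp.mpr (by linarith)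
    have hu2 : u ≤ 2 * Real.sqrt 2 := by
      rw [hu, ← h3ρ]; exact Real.exp_le_exp.mpr (by linarith)
    rw [Real.exp_neg, ← hu]
    have hE : 384 * (u + 2 * u⁻¹) = (384 * u ^ 2 + 768) / u := by
      field_simp; ring
    constructor
    · rw [hE, div_le_iff₀ hupos]
      nlinarith [mul_nonneg (by linarith : (0:ℝ) ≤ 2 * Real.sqrt 2 - u)
        (by nlinarith : (0:ℝ) ≤ 2 * u - Real.sqrt 2)]
    · constructor
      · intro h
        rw [hE, div_eq_iff (ne_of_gt hupos)] at h
        have hfac : (u - 2 * Real.sqrt 2) * (2 * u - Real.sqrt 2) = 0 := by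
          linear_combination h / 192 + 2 * hs
        have h2 : 2 * u - Real.sqrt 2 > 0 := by nlinarith
        have hueq : u = 2 * Real.sqrt 2 := by
          rcases mul_eq_zero.1 hfac with h' | h'
          · linarith
          · linarith
        have : Real.exp (3 * x) = Real.exp (3 * ρ₁) := by rw [← hu, hueq, h3ρ]
        have := Real.exp_injective this
        linarith
      · intro h
        subst h
        rw [hu, h3ρ, hinv]
        ring
  · intro x ⟨hx0, hx1⟩
    set u := Real.exp (3 * x) with hu
    have hupos : 0 < u := Real.exp_pos _
    have hu1 : 1 ≤ u := by
      rw [hu, ← Real.exp_zero]; exact Real.exp_le_exp.mpr (by linarith)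
    have hu2 : u ≤ 2 * Real.sqrt 2 := by
      rw [hu, ← h3ρ]; exact Real.exp_le_exp.mpr (by linarith)
    have e1 : Real.exp (3 * (ρ₁ + x)) = 2 * Real.sqrt 2 * u := by
      rw [show (3:ℝ) * (ρ₁ + x) = 3 * ρ₁ + 3 * x by ring, Real.exp_add, h3ρ, hu]
    have e2 : Real.exp (3 * (ρ₁ - x)) = 2 * Real.sqrt 2 / u := by
      rw [show (3:ℝ) * (ρ₁ - x) = 3 * ρ₁ - 3 * x by ring, Real.exp_sub, h3ρ, hu]
    have e3 : Real.exp (-(3 * (ρ₁ + x))) = (2 * Real.sqrt 2 * u)⁻¹ := by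
      rw [Real.exp_neg, e1]
    rw [e1, e2, e3]
    have hsne : Real.sqrt 2 ≠ 0 := ne_of_gt hs0
    have hE : 48 * (2 * (2 * Real.sqrt 2 * u) + 6 * (2 * Real.sqrt 2 / u) +
        16 * (2 * Real.sqrt 2 * u)⁻¹) =
        (192 * Real.sqrt 2 * u ^ 2 + 768 * Real.sqrt 2) / u := by
      field_simp
      linear_combination (-384) * hs
    constructor
    · rw [hE, div_le_iff₀ hupos]
      nlinarith [mul_nonneg (mul_nonneg (le_of_lt hs0) (by linarith : (0:ℝ) ≤ u - 1))
        (by nlinarith : (0:ℝ) ≤ 4 - u)]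
    · constructor
      · intro h
        rw [hE, div_eq_iff (ne_of_gt hupos)] at h
        have hfac : Real.sqrt 2 * ((u - 1) * (u - 4)) = 0 := by
          linear_combination h / 192
        have hfac' : (u - 1) * (u - 4) = 0 := by
          rcases mul_eq_zero.1 hfac with h' | h'
          · exact absurd h' hsne
          · exact h'
        have hueq : u = 1 := by
          rcases mul_eq_zero.1 hfac' with h' | h'
          · linarith
          · nlinarith
        have : Real.exp (3 * x) = Real.exp 0 := by rw [← hu, hueq, Real.exp_zero]
        have := Real.exp_injective this
        linarith
      · intro h
        subst h
        have hu' : u = 1 := by rw [hu]; simp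
        rw [hu', mul_one, div_one, hinv]
        ring
  · intro x ⟨hx0, hx1⟩
    set u := Real.exp (3 * x) with hu
    have hupos : 0 < u := Real.exp_pos _
    have hu1 : 1 ≤ u := by
      rw [hu, ← Real.exp_zero]; exact Real.exp_le_exp.mpr (by linarith)
    have hv2 : Real.exp (3 * (Real.log 3 / 2)) * Real.exp (3 * (Real.log 3 / 2)) = 27 := by
      rw [← Real.exp_add, show (3:ℝ) * (Real.log 3 / 2) + 3 * (Real.log 3 / 2)
        = Real.log 3 + Real.log 3 + Real.log 3 by ring, Real.exp_add, Real.exp_add,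
        Real.exp_log (by norm_num : (0:ℝ) < 3)]
      norm_num
    have hvpos : (0:ℝ) < Real.exp (3 * (Real.log 3 / 2)) := Real.exp_pos _
    have hv7 : Real.exp (3 * (Real.log 3 / 2)) ≤ 7 := by nlinarith
    have hu7 : u ≤ 7 := by
      refine le_trans ?_ hv7
      rw [hu]; exact Real.exp_le_exp.mpr (by linarith)
    rw [Real.exp_neg, ← hu]
    have hE : 48 * (3 * u + 21 * u⁻¹) = (144 * u ^ 2 + 1008) / u := by
      field_simp; ring
    rw [hE, div_le_iff₀ hupos]
    linarith [mul_nonneg (by linarith : (0:ℝ) ≤ u - 1) (by linarith : (0:ℝ) ≤ 7 - u)]
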